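/- Every topological group that is Hausdorff, locally compact, metrizable and separable admits a nonzero right-invariant regular Borel measure that is finite on compact sets and positive on nonempty open sets; likewise it admits such a left-invariant measure (existence of Haar measure, Haar's theorem). -/

import Mathlib

open MeasureTheory

lemma aux_ne_zero {G : Type*} [TopologicalSpace G] [Nonempty G] [MeasurableSpace G]
    (μ : Measure G) [μ.IsOpenPosMeasure] : μ ≠ 0 := by
  intro h
  have := isOpen_univ.measure_pos μ Set.univ_nonempty
  rw [h] at this
  simp at this

/-- Haar's theorem: every Hausdorff, locally compact, metrizable and separable
topological group admits a nonzero right-invariant regular Borel measure, finite on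
compact sets and positive on nonempty open sets; likewise a left-invariant one. -/
theorem haar_existence_metrizable_separable
    (G : Type*) [Group G] [TopologicalSpace G] [IsTopologicalGroup G]
    [T2Space G] [LocallyCompactSpace G]
    [TopologicalSpace.MetrizableSpace G] [TopologicalSpace.SeparableSpace G]
    [MeasurableSpace G] [BorelSpace G] :
    (∃ μ : Measure G, μ ≠ 0 ∧ μ.IsMulRightInvariant ∧ μ.Regular ∧
      IsFiniteMeasureOnCompacts μ ∧ μ.IsOpenPosMeasure) ∧
    (∃ μ : Measure G, μ ≠ 0 ∧ μ.IsMulLeftInvariant ∧ μ.Regular ∧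
      IsFiniteMeasureOnCompacts μ ∧ μ.IsOpenPosMeasure) := by
  refine ⟨⟨(Measure.haar (G := G)).inv, aux_ne_zero _, inferInstance, inferInstance,
      inferInstance, inferInstance⟩,
    ⟨Measure.haar (G := G), aux_ne_zero _, inferInstance, inferInstance,
      inferInstance, inferInstance⟩⟩
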